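/- Let c be an admissible coefficient function satisfying (Cubic values). Let i_1 ≠ i_2 and let γ = e_{i_1,j_1}+e_{i_1,j_1′}+e_{i_1,j_1″}+e_{i_2,1} ∈ ℤ^{μ_A−2}. If a_{i_1} ≥ 3 and j_1′ ≥ 2, then c(γ,0) = 0. -/

import Mathlib

/- Common framework: Frobenius manifolds for orbifold projective lines ℙ¹_A,
   following Ishibashi–Shiraishi–Takahashi. -/

namespace FrobeniusUniqueness

/-- A point index `(i, j)` labelling a flat coordinate `t_{i,j}`. -/
abbrev Pt : Type := Fin 3 × ℕ

/-- A non-negative element of `ℤ^{μ_A − 2}`: an exponent vector `α` with `α_{i,j} ∈ ℕ`. -/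
abbrev Expv : Type := Pt →₀ ℕ

/-- The standard basis vector `e_{i,j}`. -/
noncomputable def e (i : Fin 3) (j : ℕ) : Expv := Finsupp.single (i, j) 1

/-- The length `|α|` of an exponent vector. -/
def len (α : Expv) : ℕ := α.sum fun _ n => n

/-- A point index `(i,j)` is valid if `1 ≤ j ≤ a_i − 1`. -/
def ValidPt (A : Fin 3 → ℕ) (p : Pt) : Prop := 1 ≤ p.2 ∧ p.2 ≤ A p.1 - 1

/-- An exponent vector lies in `ℤ^{μ_A − 2}` iff it is supported on valid indices. -/
def Valid (A : Fin 3 → ℕ) (α : Expv) : Prop := ∀ p ∈ α.support, ValidPt A p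

/-- The combinatorial factor `s_{a,b,c}`. -/
def sFactor (a b c : ℕ) : ℂ :=
  if a = b ∧ b = c then 6
  else if a ≠ b ∧ b ≠ c ∧ a ≠ c then 1
  else 2

/-- The index type for the flat coordinates `t_1`, `t_{i,j}`, `t_{μ_A}`. -/
inductive Idx : Type where
  | one : Idx
  | pt : Fin 3 → ℕ → Idx
  | mu : Idx
deriving DecidableEq

/-- Validity of a flat coordinate index. -/
def ValidIdx (A : Fin 3 → ℕ) : Idx → Prop
  | .one => True
  | .pt i j => ValidPt A (i, j)
  | .mu => True

/-- The metric `η` in the frame `∂_1, ∂_{i,j}, ∂_{μ_A}`. -/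
noncomputable def eta (A : Fin 3 → ℕ) : Idx → Idx → ℂ
  | .one, .mu => 1
  | .mu, .one => 1
  | .pt i j, .pt i' j' =>
      if i = i' ∧ j + j' = A i ∧ 1 ≤ j ∧ j ≤ A i - 1 then (A i : ℂ)⁻¹ else 0
  | _, _ => 0

/-- The point indices occurring in an `Idx`. -/
def ptsOf : Idx → List Pt
  | .pt i j => [(i, j)]
  | _ => []

/-- The number of occurrences of `μ_A` in an `Idx`. -/
def muCount : Idx → ℕ
  | .mu => 1
  | _ => 0

/-- The factor produced when the monomial `t^{β + Σ_{p ∈ ps} e_p}` is differentiated by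
`∏_{p ∈ ps} ∂_p`, leaving the monomial `t^β`. -/
noncomputable def dfac (β : Expv) : List Pt → ℕ
  | [] => 1
  | p :: ps =>
      ((β + ((ps.map fun q => (Finsupp.single q 1 : Expv)).sum) + Finsupp.single p 1 : Expv) p)
        * dfac β ps

/-- `der A c a b d β m` is the coefficient of `t^β · e^{m·t_{μ_A}}` in `∂_a ∂_b ∂_d F`, where
`F = (1/2)t_1²t_{μ_A} + (1/2)t_1·Σ_{i,j}(1/a_i)t_{i,j}t_{i,a_i−j} + Σ_{α,m} c(α,m)t^α e^{m t_{μ_A}}`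
is the potential of the coefficient function `c`.  In particular `∂_1∂_a∂_b F = η(∂_a,∂_b)`. -/
noncomputable def der (A : Fin 3 → ℕ) (c : Expv → ℕ → ℂ) (a b d : Idx) (β : Expv) (m : ℕ) : ℂ :=
  if a = .one then (if β = 0 ∧ m = 0 then eta A b d else 0)
  else if b = .one then (if β = 0 ∧ m = 0 then eta A a d else 0)
  else if d = .one then (if β = 0 ∧ m = 0 then eta A a b else 0)
  else
    (m : ℂ) ^ (muCount a + muCount b + muCount d) *
      (dfac β (ptsOf a ++ ptsOf b ++ ptsOf d) : ℂ) *
      c (β + (((ptsOf a ++ ptsOf b ++ ptsOf d).map fun q => (Finsupp.single q 1 : Expv)).sum)) m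

/-- The coefficient of `t^β · e^{m·t_{μ_A}}` in
`Σ_{σ,τ} ∂_a∂_b∂_σF · η^{στ} · ∂_τ∂_d∂_e F`, where `(η^{στ})` is the inverse matrix of
`(η_{στ})` (so the only nonzero entries are `η^{1,μ_A} = η^{μ_A,1} = 1` and
`η^{(i,j),(i,a_i−j)} = a_i`). -/
noncomputable def quadTerm (A : Fin 3 → ℕ) (c : Expv → ℕ → ℂ) (a b d e' : Idx)
    (β : Expv) (m : ℕ) : ℂ :=
  ∑ x ∈ Finset.HasAntidiagonal.antidiagonal β, ∑ y ∈ Finset.HasAntidiagonal.antidiagonal m,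
    (der A c a b .one x.1 y.1 * der A c .mu d e' x.2 y.2
     + der A c a b .mu x.1 y.1 * der A c .one d e' x.2 y.2
     + ∑ i : Fin 3, ∑ j ∈ Finset.Icc 1 (A i - 1),
         (A i : ℂ) * der A c a b (.pt i j) x.1 y.1 * der A c (.pt i (A i - j)) d e' x.2 y.2)

/-- `χ_A = 1/a_1 + 1/a_2 + 1/a_3 − 1`. -/
noncomputable def chi (A : Fin 3 → ℕ) : ℚ := (A 0 : ℚ)⁻¹ + (A 1 : ℚ)⁻¹ + (A 2 : ℚ)⁻¹ - 1

/-- The degree of the monomial `t^α`: `Σ_{i,j} α_{i,j}·(a_i − j)/a_i`. -/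
noncomputable def deg (A : Fin 3 → ℕ) (α : Expv) : ℚ :=
  α.sum fun p n => (n : ℚ) * (((A p.1 : ℚ) - (p.2 : ℚ)) / (A p.1 : ℚ))

/-- A coefficient function is admissible if it satisfies (Homogeneity) and the WDVV
equations (coefficientwise, in the variables `t_{i,j}` and `e^{t_{μ_A}}`). -/
structure IsAdmissible (A : Fin 3 → ℕ) (c : Expv → ℕ → ℂ) : Prop where
  homog : ∀ α : Expv, Valid A α → ∀ m : ℕ, c α m ≠ 0 → deg A α + (m : ℚ) * chi A = 2
  wdvv : ∀ a b d e' : Idx, ValidIdx A a → ValidIdx A b → ValidIdx A d → ValidIdx A e' →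
      ∀ β : Expv, Valid A β → ∀ m : ℕ,
        quadTerm A c a b d e' β m = quadTerm A c a d b e' β m

/-- (Cubic values). -/
def CubicValues (A : Fin 3 → ℕ) (c : Expv → ℕ → ℂ) : Prop :=
  (∀ (i₁ i₂ i₃ : Fin 3) (j₁ j₂ j₃ : ℕ),
      ValidPt A (i₁, j₁) → ValidPt A (i₂, j₂) → ValidPt A (i₃, j₃) →
      ¬(i₁ = i₂ ∧ i₂ = i₃) → c (e i₁ j₁ + e i₂ j₂ + e i₃ j₃) 0 = 0) ∧
  (∀ (i : Fin 3) (j₁ j₂ j₃ : ℕ),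
      ValidPt A (i, j₁) → ValidPt A (i, j₂) → ValidPt A (i, j₃) →
      sFactor j₁ j₂ j₃ * c (e i j₁ + e i j₂ + e i j₃) 0 =
        if j₁ + j₂ + j₃ = A i then (A i : ℂ)⁻¹ else 0)

/-- (Normalization). -/
def Normalization (A : Fin 3 → ℕ) (c : Expv → ℕ → ℂ) : Prop :=
  (2 ≤ A 0 → c (e 0 1 + e 1 1 + e 2 1) 1 = 1) ∧
  (A 0 = 1 → A 0 < A 1 → c (e 1 1 + e 2 1) 1 = 1) ∧
  (A 0 = 1 → A 1 = 1 → A 1 < A 2 → c (e 2 1) 1 = 1) ∧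
  (A 0 = 1 → A 1 = 1 → A 2 = 1 → c 0 1 = 1)

/-- (Separation). -/
def Separation (A : Fin 3 → ℕ) (c : Expv → ℕ → ℂ) : Prop :=
  ∀ γ : Expv, Valid A γ →
    ∀ (i₁ i₂ : Fin 3) (j₁ j₂ : ℕ), i₁ ≠ i₂ → ValidPt A (i₁, j₁) → ValidPt A (i₂, j₂) →
      e i₁ j₁ + e i₂ j₂ ≤ γ → c γ 0 = 0

/-- The automorphism of `ℤ^{μ_A−2}` exchanging `e_{i₁,j}` and `e_{i₂,j}` for all `j`. -/
def swapExp (i₁ i₂ : Fin 3) (α : Expv) : Expv :=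
  Finsupp.equivMapDomain ((Equiv.swap i₁ i₂).prodCongr (Equiv.refl ℕ)) α

/-- (Symmetry). -/
def Symmetry (A : Fin 3 → ℕ) (c : Expv → ℕ → ℂ) : Prop :=
  ∀ i₁ i₂ : Fin 3, A i₁ = A i₂ → ∀ α : Expv, Valid A α → ∀ m : ℕ,
    c (swapExp i₁ i₂ α) m = c α m


lemma sum_antidiag_e {M : Type*} [AddCommMonoid M] (p : Pt) (f : Expv × Expv → M) :
    ∑ x ∈ Finset.HasAntidiagonal.antidiagonal (Finsupp.single p 1 : Expv), f x
      = f (0, Finsupp.single p 1) + f (Finsupp.single p 1, 0) := by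
  rw [Finsupp.antidiagonal_single, Finset.sum_map]
  simp [Finset.Nat.antidiagonal_succ, Prod.map, Function.Embedding.coeFn_mk]

lemma dfac_pos (β : Expv) (L : List Pt) : 0 < dfac β L := by
  induction L with
  | nil => simp [dfac]
  | cons p ps ih =>
      refine Nat.mul_pos ?_ ih
      simp [Finsupp.add_apply, Finsupp.single_apply]

lemma sFactor_ne (a b c : ℕ) : sFactor a b c ≠ 0 := by
  unfold sFactor; split_ifs <;> norm_num

lemma dfac0_sFactor (i : Fin 3) (a b c : ℕ) :
    (dfac 0 [(i,a),(i,b),(i,c)] : ℂ) = sFactor a b c := by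
  simp only [dfac, List.map, List.sum_cons, List.sum_nil]
  simp [Finsupp.add_apply, Finsupp.single_apply, sFactor, Prod.ext_iff]
  split_ifs <;> first | omega | norm_num

lemma der_mu_left (A : Fin 3 → ℕ) (c : Expv → ℕ → ℂ) (i j i' j' : _) (x : Expv) :
    der A c .mu (.pt i j) (.pt i' j') x 0 = 0 := by
  simp [der, muCount]

lemma der_mu_mid (A : Fin 3 → ℕ) (c : Expv → ℕ → ℂ) (i j i' j' : _) (x : Expv) :
    der A c (.pt i j) (.pt i' j') .mu x 0 = 0 := by
  simp [der, muCount]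

lemma der_pts (A : Fin 3 → ℕ) (c : Expv → ℕ → ℂ) (i j i' j' i'' j'' : _) (x : Expv) :
    der A c (.pt i j) (.pt i' j') (.pt i'' j'') x 0 =
      (dfac x [(i,j),(i',j'),(i'',j'')] : ℂ) *
        c (x + (Finsupp.single (i,j) 1 + (Finsupp.single (i',j') 1 + Finsupp.single (i'',j'') 1))) 0 := by
  simp [der, muCount, ptsOf]

lemma cubic_mixed (A : Fin 3 → ℕ) (c : Expv → ℕ → ℂ) (hcub : CubicValues A c)
    (i₁ i₂ i₃ : Fin 3) (j₁ j₂ j₃ : ℕ)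
    (h1 : ValidPt A (i₁, j₁)) (h2 : ValidPt A (i₂, j₂)) (h3 : ValidPt A (i₃, j₃))
    (hne : ¬(i₁ = i₂ ∧ i₂ = i₃)) :
    c (Finsupp.single (i₁,j₁) 1 + (Finsupp.single (i₂,j₂) 1 + Finsupp.single (i₃,j₃) 1)) 0 = 0 := by
  have := hcub.1 i₁ i₂ i₃ j₁ j₂ j₃ h1 h2 h3 hne
  simpa [e, add_assoc] using this

lemma validPt_mk {A : Fin 3 → ℕ} {i : Fin 3} {j : ℕ} (h1 : 1 ≤ j) (h2 : j ≤ A i - 1) :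
    ValidPt A (i,j) := ⟨h1, h2⟩

lemma quad_eval (A : Fin 3 → ℕ) (c : Expv → ℕ → ℂ) (hcub : CubicValues A c)
    (i₁ i₂ : Fin 3) (hne : i₁ ≠ i₂) (p q r : ℕ) (ha : 3 ≤ A i₁)
    (hp : ValidPt A (i₁,p)) (hq : ValidPt A (i₁,q)) (hv2 : ValidPt A (i₂,1)) :
    quadTerm A c (.pt i₁ 1) (.pt i₁ p) (.pt i₁ q) (.pt i₂ 1) (e i₁ r) 0 =
      if p + 2 ≤ A i₁ then
        (dfac (Finsupp.single (i₁,r) 1) [(i₁, p+1), (i₁, q), (i₂,1)] : ℂ) *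
          c (Finsupp.single (i₁,r) 1 + (Finsupp.single (i₁,p+1) 1 +
              (Finsupp.single (i₁,q) 1 + Finsupp.single (i₂,1) 1))) 0
      else 0 := by
  obtain ⟨hp1, hp2⟩ : 1 ≤ p ∧ p ≤ A i₁ - 1 := hp
  obtain ⟨hq1, hq2⟩ : 1 ≤ q ∧ q ≤ A i₁ - 1 := hq
  have hv2' : 1 ≤ (1:ℕ) ∧ 1 ≤ A i₂ - 1 := hv2
  have hv1 : ValidPt A (i₁, 1) := validPt_mk (le_refl 1) (by omega)
  unfold quadTerm
  simp only [e]
  rw [sum_antidiag_e]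
  rw [Finset.Nat.antidiagonal_zero, Finset.sum_singleton, Finset.sum_singleton]
  simp only [der_mu_left, der_mu_mid, mul_zero, zero_mul, add_zero, zero_add]
  -- second split (β, 0) vanishes
  have hsplit2 : ∀ i : Fin 3, ∀ j ∈ Finset.Icc 1 (A i - 1),
      (A i : ℂ) * der A c (.pt i₁ 1) (.pt i₁ p) (.pt i j) (Finsupp.single (i₁,r) 1) 0 *
        der A c (.pt i (A i - j)) (.pt i₁ q) (.pt i₂ 1) 0 0 = 0 := by
    intro i j hj
    rw [Finset.mem_Icc] at hj
    have hAi : 2 ≤ A i := by omega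
    rw [der_pts A c i (A i - j) i₁ q i₂ 1 0, zero_add]
    rw [cubic_mixed A c hcub i i₁ i₂ (A i - j) q 1 (validPt_mk (by omega) (by omega))
      (validPt_mk hq1 hq2) hv2 (by rintro ⟨rfl, h⟩; exact hne h)]
    ring
  rw [Finset.sum_congr rfl (fun i _ => Finset.sum_eq_zero (hsplit2 i))]
  rw [Finset.sum_const_zero, add_zero]
  -- first split (0, β):
  rw [Finset.sum_eq_single i₁]
  · -- inner sum over j
    by_cases hcase : p + 2 ≤ A i₁
    · rw [if_pos hcase]
      have hj0mem : A i₁ - 1 - p ∈ Finset.Icc 1 (A i₁ - 1) := by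
        rw [Finset.mem_Icc]; omega
      rw [Finset.sum_eq_single_of_mem (A i₁ - 1 - p) hj0mem]
      · rw [der_pts, der_pts]
        have e1 : A i₁ - (A i₁ - 1 - p) = p + 1 := by omega
        rw [e1]
        have e2 : (0 : Expv) + (Finsupp.single (i₁,1) 1 +
            (Finsupp.single (i₁,p) 1 + Finsupp.single (i₁, A i₁ - 1 - p) 1)) =
            Finsupp.single (i₁,1) 1 + Finsupp.single (i₁,p) 1 +
              Finsupp.single (i₁, A i₁ - 1 - p) 1 := by
          rw [zero_add, add_assoc]
        rw [e2]
        have hcv := hcub.2 i₁ 1 p (A i₁ - 1 - p) hv1 (validPt_mk hp1 hp2)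
          (validPt_mk (by omega) (by omega))
        simp only [e] at hcv
        rw [if_pos (by omega)] at hcv
        have hs := sFactor_ne 1 p (A i₁ - 1 - p)
        have hcval : c (Finsupp.single (i₁,1) 1 + Finsupp.single (i₁,p) 1 +
            Finsupp.single (i₁, A i₁ - 1 - p) 1) 0
            = (sFactor 1 p (A i₁ - 1 - p))⁻¹ * (A i₁ : ℂ)⁻¹ := by
          rw [← hcv, inv_mul_cancel_left₀ hs]
        rw [hcval, dfac0_sFactor]
        have hA0 : (A i₁ : ℂ) ≠ 0 := by
          exact_mod_cast (by omega : A i₁ ≠ 0)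
        field_simp
      · intro j hj hjne
        rw [Finset.mem_Icc] at hj
        rw [der_pts]
        have hcv := hcub.2 i₁ 1 p j hv1 (validPt_mk hp1 hp2) (validPt_mk (by omega) (by omega))
        simp only [e] at hcv
        rw [if_neg (by omega)] at hcv
        have hs := sFactor_ne 1 p j
        have hz : c (Finsupp.single (i₁,1) 1 + Finsupp.single (i₁,p) 1 +
            Finsupp.single (i₁,j) 1) 0 = 0 := by
          rcases mul_eq_zero.mp hcv with h | h
          · exact absurd h hs
          · exact h
        rw [show (0 : Expv) + (Finsupp.single (i₁,1) 1 +
            (Finsupp.single (i₁,p) 1 + Finsupp.single (i₁,j) 1)) =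
            Finsupp.single (i₁,1) 1 + Finsupp.single (i₁,p) 1 +
              Finsupp.single (i₁,j) 1 by rw [zero_add, add_assoc]]
        rw [hz]
        ring
    · rw [if_neg hcase]
      refine Finset.sum_eq_zero (fun j hj => ?_)
      rw [Finset.mem_Icc] at hj
      rw [der_pts]
      have hcv := hcub.2 i₁ 1 p j hv1 (validPt_mk hp1 hp2) (validPt_mk (by omega) (by omega))
      simp only [e] at hcv
      rw [if_neg (by omega)] at hcv
      have hs := sFactor_ne 1 p j
      have hz : c (Finsupp.single (i₁,1) 1 + Finsupp.single (i₁,p) 1 +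
          Finsupp.single (i₁,j) 1) 0 = 0 := by
        rcases mul_eq_zero.mp hcv with h | h
        · exact absurd h hs
        · exact h
      rw [show (0 : Expv) + (Finsupp.single (i₁,1) 1 +
          (Finsupp.single (i₁,p) 1 + Finsupp.single (i₁,j) 1)) =
          Finsupp.single (i₁,1) 1 + Finsupp.single (i₁,p) 1 +
            Finsupp.single (i₁,j) 1 by rw [zero_add, add_assoc]]
      rw [hz]
      ring
  · intro i _ hine
    refine Finset.sum_eq_zero (fun j hj => ?_)
    rw [Finset.mem_Icc] at hj
    rw [der_pts, zero_add]
    rw [cubic_mixed A c hcub i₁ i₁ i 1 p j hv1 (validPt_mk hp1 hp2) (validPt_mk (by omega) (by omega))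
      (by rintro ⟨-, h⟩; exact hine h.symm)]
    ring
  · intro h
    exact absurd (Finset.mem_univ i₁) h

lemma valid_e (A : Fin 3 → ℕ) {i : Fin 3} {j : ℕ} (h : ValidPt A (i,j)) :
    Valid A (e i j) := by
  intro p hp
  rw [e, Finsupp.support_single_ne_zero _ one_ne_zero, Finset.mem_singleton] at hp
  rwa [hp]

lemma valid_add (A : Fin 3 → ℕ) {α β : Expv} (hα : Valid A α) (hβ : Valid A β) :
    Valid A (α + β) := by
  intro p hp
  rcases Finset.mem_union.mp (Finsupp.support_add hp) with h | h
  · exact hα p h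
  · exact hβ p h

lemma push (A : Fin 3 → ℕ) (c : Expv → ℕ → ℂ) (hadm : IsAdmissible A c)
    (hcub : CubicValues A c) (i₁ i₂ : Fin 3) (hne : i₁ ≠ i₂) (ha : 3 ≤ A i₁)
    (k1 k2 k3 : ℕ) (h1 : 1 ≤ k1) (h1' : k1 ≤ A i₁ - 1) (h2 : 2 ≤ k2) (h2' : k2 ≤ A i₁ - 1)
    (h3 : 1 ≤ k3) (h3' : k3 ≤ A i₁ - 1) (hv2 : ValidPt A (i₂, 1)) :
    ∃ D D' : ℕ, 0 < D ∧ (A i₁ - 1 ≤ k1 → D' = 0) ∧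
      (D : ℂ) * c (e i₁ k1 + e i₁ k2 + e i₁ k3 + e i₂ 1) 0 =
      (D' : ℂ) * c (e i₁ (k1+1) + e i₁ (k2-1) + e i₁ k3 + e i₂ 1) 0 := by
  have hw := hadm.wdvv (.pt i₁ 1) (.pt i₁ (k2-1)) (.pt i₁ k1) (.pt i₂ 1)
    (validPt_mk (le_refl 1) (by omega)) (validPt_mk (by omega) (by omega))
    (validPt_mk h1 h1') hv2 (e i₁ k3) (valid_e A (validPt_mk h3 h3')) 0
  rw [quad_eval A c hcub i₁ i₂ hne (k2-1) k1 k3 ha (validPt_mk (by omega) (by omega))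
      (validPt_mk h1 h1') hv2,
    quad_eval A c hcub i₁ i₂ hne k1 (k2-1) k3 ha (validPt_mk h1 h1')
      (validPt_mk (by omega) (by omega)) hv2] at hw
  rw [if_pos (by omega : k2 - 1 + 2 ≤ A i₁)] at hw
  have ek2 : k2 - 1 + 1 = k2 := by omega
  rw [ek2] at hw
  have eX : Finsupp.single (i₁,k3) 1 + (Finsupp.single (i₁,k2) 1 +
      (Finsupp.single (i₁,k1) 1 + Finsupp.single (i₂,1) 1)) =
      e i₁ k1 + e i₁ k2 + e i₁ k3 + e i₂ 1 := by
    simp only [e]; abel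
  rw [eX] at hw
  by_cases hcase : k1 + 2 ≤ A i₁
  · rw [if_pos hcase] at hw
    have eY : Finsupp.single (i₁,k3) 1 + (Finsupp.single (i₁,k1+1) 1 +
        (Finsupp.single (i₁,k2-1) 1 + Finsupp.single (i₂,1) 1)) =
        e i₁ (k1+1) + e i₁ (k2-1) + e i₁ k3 + e i₂ 1 := by
      simp only [e]; abel
    rw [eY] at hw
    exact ⟨_, _, dfac_pos _ _, fun h => absurd h (by omega), hw⟩
  · rw [if_neg hcase] at hw
    refine ⟨_, 0, dfac_pos (Finsupp.single (i₁,k3) 1) [(i₁,k2),(i₁,k1),(i₂,1)],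
      fun _ => rfl, ?_⟩
    rw [hw, Nat.cast_zero, zero_mul]

lemma main_ind (A : Fin 3 → ℕ) (c : Expv → ℕ → ℂ) (hadm : IsAdmissible A c)
    (hcub : CubicValues A c) (i₁ i₂ : Fin 3) (hne : i₁ ≠ i₂) (ha : 3 ≤ A i₁)
    (hv2 : ValidPt A (i₂, 1)) :
    ∀ n k1 k2 k3 : ℕ, 1 ≤ k1 → k1 ≤ A i₁ - 1 → 2 ≤ k2 → k2 ≤ A i₁ - 1 →
      1 ≤ k3 → k3 ≤ A i₁ - 1 → A i₁ + 2 ≤ k1 + k2 + k3 → A i₁ - 1 - k1 ≤ n →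
      c (e i₁ k1 + e i₁ k2 + e i₁ k3 + e i₂ 1) 0 = 0 := by
  intro n
  induction n with
  | zero =>
      intro k1 k2 k3 h1 h1' h2 h2' h3 h3' hsum hn
      obtain ⟨D, D', hD, hD', heq⟩ := push A c hadm hcub i₁ i₂ hne ha k1 k2 k3
        h1 h1' h2 h2' h3 h3' hv2
      rw [hD' (by omega), Nat.cast_zero, zero_mul] at heq
      have hDne : (D : ℂ) ≠ 0 := Nat.cast_ne_zero.mpr hD.ne'
      exact (mul_eq_zero.mp heq).resolve_left hDne
  | succ n ih =>
      intro k1 k2 k3 h1 h1' h2 h2' h3 h3' hsum hn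
      obtain ⟨D, D', hD, hD', heq⟩ := push A c hadm hcub i₁ i₂ hne ha k1 k2 k3
        h1 h1' h2 h2' h3 h3' hv2
      have hDne : (D : ℂ) ≠ 0 := Nat.cast_ne_zero.mpr hD.ne'
      by_cases hk1 : A i₁ - 1 ≤ k1
      · rw [hD' hk1, Nat.cast_zero, zero_mul] at heq
        exact (mul_eq_zero.mp heq).resolve_left hDne
      · have hnext : c (e i₁ (k1+1) + e i₁ (k2-1) + e i₁ k3 + e i₂ 1) 0 = 0 := by
          by_cases hk2 : 3 ≤ k2
          · exact ih (k1+1) (k2-1) k3 (by omega) (by omega) (by omega) (by omega)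
              h3 h3' (by omega) (by omega)
          · have hk2' : k2 = 2 := by omega
            have hre : e i₁ (k1+1) + e i₁ (k2-1) + e i₁ k3 + e i₂ 1 =
                e i₁ (k1+1) + e i₁ k3 + e i₁ (k2-1) + e i₂ 1 := by
              simp only [e]; abel
            rw [hre, hk2']
            exact ih (k1+1) k3 (2-1) (by omega) (by omega) (by omega) (by omega)
              (by omega) (by omega) (by omega) (by omega)
        rw [hnext, mul_zero] at heq
        exact (mul_eq_zero.mp heq).resolve_left hDne

lemma deg_add (A : Fin 3 → ℕ) (α β : Expv) : deg A (α + β) = deg A α + deg A β :=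
  Finsupp.sum_add_index' (fun p => by simp) (fun p m n => by push_cast; ring)

lemma deg_e (A : Fin 3 → ℕ) (i : Fin 3) (j : ℕ) :
    deg A (e i j) = ((A i : ℚ) - (j : ℚ)) / (A i : ℚ) := by
  rw [e, deg, Finsupp.sum_single_index]; · simp
  · simp

theorem step1_iii_case2' (A : Fin 3 → ℕ)
    (c : Expv → ℕ → ℂ) (hadm : IsAdmissible A c) (hcub : CubicValues A c)
    (i₁ i₂ : Fin 3) (hne : i₁ ≠ i₂) (j₁ j₁' j₁'' : ℕ)
    (hv₁ : ValidPt A (i₁, j₁)) (hv₁' : ValidPt A (i₁, j₁'))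
    (hv₁'' : ValidPt A (i₁, j₁'')) (hv₂ : ValidPt A (i₂, 1))
    (ha₁ : 3 ≤ A i₁) (hj₁' : 2 ≤ j₁') :
    c (e i₁ j₁ + e i₁ j₁' + e i₁ j₁'' + e i₂ 1) 0 = 0 := by
  have hu : 1 ≤ j₁ ∧ j₁ ≤ A i₁ - 1 := hv₁
  have hv : 1 ≤ j₁' ∧ j₁' ≤ A i₁ - 1 := hv₁'
  have hw : 1 ≤ j₁'' ∧ j₁'' ≤ A i₁ - 1 := hv₁''
  have hx : 1 ≤ (1:ℕ) ∧ 1 ≤ A i₂ - 1 := hv₂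
  obtain ⟨u1, u2⟩ := hu
  obtain ⟨v1, v2⟩ := hv
  obtain ⟨w1, w2⟩ := hw
  obtain ⟨x1, x2⟩ := hx
  have hb2 : 2 ≤ A i₂ := by omega
  by_cases hc : c (e i₁ j₁ + e i₁ j₁' + e i₁ j₁'' + e i₂ 1) 0 = 0
  · exact hc
  · have hval : Valid A (e i₁ j₁ + e i₁ j₁' + e i₁ j₁'' + e i₂ 1) :=
      valid_add A (valid_add A (valid_add A (valid_e A hv₁) (valid_e A hv₁'))
        (valid_e A hv₁'')) (valid_e A hv₂)
    have hdeg := hadm.homog _ hval 0 hc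
    rw [deg_add, deg_add, deg_add, deg_e, deg_e, deg_e, deg_e] at hdeg
    have haQ : (A i₁ : ℚ) ≠ 0 := by positivity
    have hbQ : (A i₂ : ℚ) ≠ 0 := by positivity
    have key : ((j₁ + j₁' + j₁'' : ℕ) : ℚ) * (A i₂ : ℚ) + (A i₁ : ℚ)
        = 2 * (A i₁ : ℚ) * (A i₂ : ℚ) := by
      push_cast
      push_cast at hdeg
      field_simp at hdeg
      linarith
    have keyn : (j₁ + j₁' + j₁'') * A i₂ + A i₁ = 2 * A i₁ * A i₂ := by
      exact_mod_cast key
    have hsum : A i₁ + 2 ≤ j₁ + j₁' + j₁'' := by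
      rcases Nat.lt_or_ge (A i₂) 3 with hb | hb
      · interval_cases h : A i₂ <;> omega
        --
      · by_contra hcon
        push_neg at hcon
        nlinarith [keyn, ha₁, hb]
    exact main_ind A c hadm hcub i₁ i₂ hne ha₁ hv₂ (A i₁ - 1 - j₁) j₁ j₁' j₁''
      u1 u2 hj₁' v2 w1 w2 hsum le_rfl

/-- Sub-Lemma (Step 1-(iii), Case 2). -/
theorem step1_iii_case2 (A : Fin 3 → ℕ) (hA : ∀ i, 1 ≤ A i) (hA01 : A 0 ≤ A 1) (hA12 : A 1 ≤ A 2)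
    (c : Expv → ℕ → ℂ) (hadm : IsAdmissible A c) (hcub : CubicValues A c)
    (i₁ i₂ : Fin 3) (hne : i₁ ≠ i₂) (j₁ j₁' j₁'' : ℕ)
    (hv₁ : ValidPt A (i₁, j₁)) (hv₁' : ValidPt A (i₁, j₁'))
    (hv₁'' : ValidPt A (i₁, j₁'')) (hv₂ : ValidPt A (i₂, 1))
    (ha₁ : 3 ≤ A i₁) (hj₁' : 2 ≤ j₁') :
    c (e i₁ j₁ + e i₁ j₁' + e i₁ j₁'' + e i₂ 1) 0 = 0 :=
  step1_iii_case2' A c hadm hcub i₁ i₂ hne j₁ j₁' j₁'' hv₁ hv₁' hv₁'' hv₂ ha₁ hj₁'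

end FrobeniusUniqueness
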